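/- Let (E,ρ) and (I,d) be complete separable metric spaces, let μ be a finite Borel measure on E×I that admits a mark function, and let μ_n (n ∈ ℕ) be finite Borel measures on E×I with μ_n → μ weakly. Then β(μ) = 0 and β(μ_n) → 0 as n → ∞. -/

import Mathlib

set_option maxHeartbeats 1000000
set_option synthInstance.maxHeartbeats 200000


open MeasureTheory Filter Topology ENNReal

/-- `β(μ) = ∫_X ∫_I ∫_I (1 ∧ d(u,v)) K_x(du) K_x(dv) ν(dx)` where `ν` is the first
marginal of `μ` and `K` its disintegration (conditional) kernel. -/
noncomputable def beta {X I : Type*} [MeasurableSpace X]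
    [MetricSpace I] [MeasurableSpace I] [StandardBorelSpace I] [Nonempty I]
    (μ : Measure (X × I)) [IsFiniteMeasure μ] : ℝ≥0∞ :=
  ∫⁻ x, ∫⁻ u, ∫⁻ v, ENNReal.ofReal (min 1 (dist u v)) ∂(μ.condKernel x) ∂(μ.condKernel x) ∂μ.fst

/-- `κ` is a mark function for `μ`: it is measurable and `μ(dx,du) = ν(dx) δ_{κ(x)}(du)`,
i.e. `μ` is the pushforward of its first marginal under `x ↦ (x, κ x)`. -/
def IsMarkFunction {X I : Type*} [MeasurableSpace X] [MeasurableSpace I]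
    (μ : Measure (X × I)) (κ : X → I) : Prop :=
  Measurable κ ∧ μ = μ.fst.map (fun x => (x, κ x))

/-- Weak convergence of finite Borel measures: convergence of integrals of all bounded
continuous functions. -/
def WeakConv {E : Type*} [TopologicalSpace E] [MeasurableSpace E]
    (μ : ℕ → Measure E) (ν : Measure E) : Prop :=
  ∀ f : BoundedContinuousFunction E ℝ,
    Tendsto (fun n => ∫ x, f x ∂(μ n)) atTop (𝓝 (∫ x, f x ∂ν))

open ProbabilityTheory

lemma min_one_add_min_one (a b : ℝ) (ha : 0 ≤ a) (hb : 0 ≤ b) :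
    min 1 (a + b) ≤ min 1 a + min 1 b := by
  rcases le_total 1 a with h | h
  · calc min 1 (a + b) ≤ 1 := min_le_left _ _
      _ = min 1 a := (min_eq_left h).symm
      _ ≤ min 1 a + min 1 b := le_add_of_nonneg_right (le_min zero_le_one hb)
  rcases le_total 1 b with h' | h'
  · calc min 1 (a + b) ≤ 1 := min_le_left _ _
      _ = min 1 b := (min_eq_left h').symm
      _ ≤ min 1 a + min 1 b := le_add_of_nonneg_left (le_min zero_le_one ha)
  · rw [min_eq_right h, min_eq_right h']
    exact min_le_right _ _

/-- Map by the graph of a measurable function equals compProd with the deterministic kernel. -/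
lemma map_graph_eq_compProd_deterministic {E I : Type*} [MeasurableSpace E]
    [MeasurableSpace I] [MeasurableSingletonClass I]
    (ν : Measure E) [SFinite ν] {κ : E → I} (hκ : Measurable κ) :
    ν.map (fun x => (x, κ x)) = ν ⊗ₘ Kernel.deterministic κ hκ := by
  have hgraph : Measurable fun x : E => (x, κ x) := measurable_id.prodMk hκ
  ext s hs
  rw [Measure.map_apply hgraph hs, Measure.compProd_apply hs,
    ← lintegral_indicator_one (hgraph hs)]
  refine lintegral_congr fun x => ?_
  rw [Kernel.deterministic_apply, Measure.dirac_apply' _ (measurable_prodMk_left hs)]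
  by_cases hmem : (x, κ x) ∈ s
  · rw [Set.indicator_of_mem (show κ x ∈ Prod.mk x ⁻¹' s from hmem),
      Set.indicator_of_mem (show x ∈ (fun x => (x, κ x)) ⁻¹' s from hmem)]
    rfl
  · rw [Set.indicator_of_notMem (show κ x ∉ Prod.mk x ⁻¹' s from hmem),
      Set.indicator_of_notMem (show x ∉ (fun x => (x, κ x)) ⁻¹' s from hmem)]

lemma beta_eq_zero_of_mark {E I : Type*} [MeasurableSpace E]
    [MetricSpace I] [MeasurableSpace I] [BorelSpace I] [SecondCountableTopology I]
    [StandardBorelSpace I] [Nonempty I]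
    (μ : Measure (E × I)) [IsFiniteMeasure μ] {κ : E → I} (hκ : Measurable κ)
    (hμ : μ = μ.fst.map (fun x => (x, κ x))) : beta μ = 0 := by
  have hcomp : μ = μ.fst ⊗ₘ Kernel.deterministic κ hκ := by
    calc μ = μ.fst.map (fun x => (x, κ x)) := hμ
      _ = μ.fst ⊗ₘ Kernel.deterministic κ hκ := map_graph_eq_compProd_deterministic _ hκ
  have huniq := eq_condKernel_of_measure_eq_compProd (Kernel.deterministic κ hκ) hcomp
  have hfm : Measurable (fun p : I × I => ENNReal.ofReal (min 1 (dist p.1 p.2))) :=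
    (ENNReal.continuous_ofReal.comp (continuous_const.min continuous_dist)).measurable
  have hzero : ∀ᵐ x ∂μ.fst,
      (∫⁻ u, ∫⁻ v, ENNReal.ofReal (min 1 (dist u v)) ∂(μ.condKernel x) ∂(μ.condKernel x)) = 0 := by
    filter_upwards [huniq] with x hx
    rw [← hx, Kernel.deterministic_apply]
    have hout : Measurable fun u : I =>
        ∫⁻ v, ENNReal.ofReal (min 1 (dist u v)) ∂(Measure.dirac (κ x)) :=
      Measurable.lintegral_prod_right hfm
    rw [lintegral_dirac' _ hout, lintegral_dirac' _
      (show Measurable fun v : I => ENNReal.ofReal (min 1 (dist (κ x) v)) from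
        (ENNReal.continuous_ofReal.comp
          (continuous_const.min (continuous_const.dist continuous_id))).measurable)]
    simp [dist_self, min_eq_right (zero_le_one (α := ℝ))]
  simp only [_root_.beta]
  rw [lintegral_congr_ae hzero, lintegral_zero]

lemma beta_le_lintegral {E I : Type*} [MeasurableSpace E]
    [MetricSpace I] [MeasurableSpace I] [BorelSpace I] [SecondCountableTopology I]
    [StandardBorelSpace I] [Nonempty I]
    (m : Measure (E × I)) [IsFiniteMeasure m]
    {B : Type*} [NormedAddCommGroup B] {ι : I → B} (hι : Isometry ι)
    {g : E → B}
    (hg : Measurable (fun p : E × I => ENNReal.ofReal (min 1 ‖ι p.2 - g p.1‖))) :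
    beta m ≤ 2 * ∫⁻ p : E × I, ENNReal.ofReal (min 1 ‖ι p.2 - g p.1‖) ∂m := by
  set A : E → I → ℝ≥0∞ := fun x u => ENNReal.ofReal (min 1 ‖ι u - g x‖) with hAdef
  have hAm : Measurable (Function.uncurry A) := by exact hg
  have key : ∀ x : E,
      (∫⁻ u, ∫⁻ v, ENNReal.ofReal (min 1 (dist u v)) ∂(m.condKernel x) ∂(m.condKernel x))
        ≤ 2 * ∫⁻ u, A x u ∂(m.condKernel x) := by
    intro x
    have hpt : ∀ u v : I, ENNReal.ofReal (min 1 (dist u v)) ≤ A x u + A x v := by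
      intro u v
      have hd : dist u v ≤ ‖ι u - g x‖ + ‖ι v - g x‖ := by
        calc dist u v = dist (ι u) (ι v) := (hι.dist_eq u v).symm
          _ ≤ dist (ι u) (g x) + dist (g x) (ι v) := dist_triangle _ _ _
          _ = ‖ι u - g x‖ + ‖ι v - g x‖ := by
              rw [dist_eq_norm, dist_eq_norm, norm_sub_rev (g x)]
      calc ENNReal.ofReal (min 1 (dist u v))
          ≤ ENNReal.ofReal (min 1 ‖ι u - g x‖ + min 1 ‖ι v - g x‖) := by
            refine ENNReal.ofReal_le_ofReal ?_
            refine le_trans (min_le_min le_rfl hd) ?_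
            exact min_one_add_min_one _ _ (norm_nonneg _) (norm_nonneg _)
        _ ≤ A x u + A x v := ENNReal.ofReal_add_le
    calc (∫⁻ u, ∫⁻ v, ENNReal.ofReal (min 1 (dist u v)) ∂(m.condKernel x) ∂(m.condKernel x))
        ≤ ∫⁻ u, ∫⁻ v, (A x u + A x v) ∂(m.condKernel x) ∂(m.condKernel x) :=
          lintegral_mono fun u => lintegral_mono fun v => hpt u v
      _ = ∫⁻ u, (A x u + ∫⁻ v, A x v ∂(m.condKernel x)) ∂(m.condKernel x) := by
          refine lintegral_congr fun u => ?_
          rw [lintegral_add_left measurable_const, lintegral_const]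
          simp [measure_univ]
      _ = (∫⁻ u, A x u ∂(m.condKernel x)) + (∫⁻ v, A x v ∂(m.condKernel x)) := by
          rw [lintegral_add_right _ measurable_const, lintegral_const]
          simp [measure_univ]
      _ = 2 * ∫⁻ u, A x u ∂(m.condKernel x) := (two_mul _).symm
  have hmeasint : Measurable fun x => ∫⁻ u, A x u ∂(m.condKernel x) :=
    Measurable.lintegral_kernel_prod_right hAm
  calc beta m ≤ ∫⁻ x, 2 * ∫⁻ u, A x u ∂(m.condKernel x) ∂m.fst := lintegral_mono key
    _ = 2 * ∫⁻ x, ∫⁻ u, A x u ∂(m.condKernel x) ∂m.fst := lintegral_const_mul 2 hmeasint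
    _ = 2 * ∫⁻ p : E × I, ENNReal.ofReal (min 1 ‖ι p.2 - g p.1‖) ∂m := by
        conv_rhs => rw [← m.disintegrate m.condKernel]
        rw [Measure.lintegral_compProd hg]

/-- If `μ` admits a mark function and `μ_n → μ` weakly, then `β(μ) = 0` and
`β(μ_n) → 0`. -/
theorem beta_tendsto_zero_of_weak_limit_markFunction {E I : Type*}
    [MetricSpace E] [CompleteSpace E] [SecondCountableTopology E]
    [MeasurableSpace E] [BorelSpace E]
    [MetricSpace I] [CompleteSpace I] [SecondCountableTopology I]
    [MeasurableSpace I] [BorelSpace I] [Nonempty I]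
    (μ : Measure (E × I)) [IsFiniteMeasure μ]
    (hmark : ∃ κ : E → I, IsMarkFunction μ κ)
    (μs : ℕ → Measure (E × I)) [∀ n, IsFiniteMeasure (μs n)]
    (hconv : WeakConv μs μ) :
    beta μ = 0 ∧ Tendsto (fun n => beta (μs n)) atTop (𝓝 0) := by
  obtain ⟨κ, hκmeas, hμeq⟩ := hmark
  refine ⟨beta_eq_zero_of_mark μ hκmeas hμeq, ?_⟩
  rw [ENNReal.tendsto_nhds_zero]
  intro ε hε
  set c : ℝ≥0∞ := min ε 1 with hc
  have hc0 : 0 < c := lt_min hε zero_lt_one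
  have hctop : c ≠ ∞ := ne_of_lt (lt_of_le_of_lt (min_le_right _ _) one_lt_top)
  set δ : ℝ := c.toReal / 7 with hδdef
  have hδ : 0 < δ := div_pos (ENNReal.toReal_pos hc0.ne' hctop) (by norm_num)
  set ι : I → lp (fun _ : ℕ => ℝ) ∞ := kuratowskiEmbedding I with hιdef
  have hι : Isometry ι := kuratowskiEmbedding.isometry I
  set f : E → lp (fun _ : ℕ => ℝ) ∞ := fun x => ι (κ x) with hfdef
  have hfs : StronglyMeasurable f := hι.continuous.comp_stronglyMeasurable
    hκmeas.stronglyMeasurable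
  set ν : Measure E := μ.fst with hνdef
  have hsets : ∀ n : ℕ, MeasurableSet {x : E | (n : ℝ) < ‖f x‖} := fun n =>
    measurableSet_lt measurable_const hfs.norm.measurable
  have hanti : Antitone fun n : ℕ => {x : E | (n : ℝ) < ‖f x‖} := by
    intro a b hab x hx
    simp only [Set.mem_setOf_eq] at hx ⊢
    exact lt_of_le_of_lt (Nat.cast_le.2 hab) hx
  have hinter : (⋂ n : ℕ, {x : E | (n : ℝ) < ‖f x‖}) = ∅ := by
    ext x
    simp only [Set.mem_iInter, Set.mem_setOf_eq, Set.mem_empty_iff_false, iff_false, not_forall,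
      not_lt]
    obtain ⟨n, hn⟩ := exists_nat_gt ‖f x‖
    exact ⟨n, hn.le⟩
  have htend := tendsto_measure_iInter_atTop (μ := ν)
    (fun n => (hsets n).nullMeasurableSet) hanti ⟨0, measure_ne_top ν _⟩
  rw [hinter, measure_empty] at htend
  obtain ⟨N, hN⟩ := (htend.eventually_lt_const
    (show (0 : ℝ≥0∞) < ENNReal.ofReal δ from ENNReal.ofReal_pos.2 hδ)).exists
  set fR : E → lp (fun _ : ℕ => ℝ) ∞ := fun x => if ‖f x‖ ≤ (N : ℝ) then f x else 0 with hfRdef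
  have hfRs : StronglyMeasurable fR :=
    StronglyMeasurable.ite (measurableSet_le hfs.norm.measurable measurable_const) hfs
      stronglyMeasurable_const
  have hfRmem : MemLp fR 1 ν := by
    refine MemLp.of_bound hfRs.aestronglyMeasurable (N : ℝ) (ae_of_all _ fun x => ?_)
    by_cases h : ‖f x‖ ≤ (N : ℝ)
    · rw [show fR x = f x from if_pos h]; exact h
    · rw [show fR x = 0 from if_neg h, norm_zero]; exact Nat.cast_nonneg N
  obtain ⟨g, hg, -⟩ := hfRmem.exists_boundedContinuous_eLpNorm_sub_le one_ne_top
    (ne_of_gt (ENNReal.ofReal_pos.2 hδ))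
  have hgl : ∫⁻ x, (‖fR x - g x‖₊ : ℝ≥0∞) ∂ν ≤ ENNReal.ofReal δ := by
    rw [eLpNorm_one_eq_lintegral_enorm] at hg
    exact hg
  -- pointwise bound and the key bound for the limit measure
  have hbound : ∫⁻ x, ENNReal.ofReal (min 1 ‖f x - g x‖) ∂ν
      ≤ ENNReal.ofReal δ + ENNReal.ofReal δ := by
    have hpt : ∀ x, ENNReal.ofReal (min 1 ‖f x - g x‖)
        ≤ Set.indicator {x : E | (N : ℝ) < ‖f x‖} (1 : E → ℝ≥0∞) x
          + (‖fR x - g x‖₊ : ℝ≥0∞) := by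
      intro x
      by_cases h : ‖f x‖ ≤ (N : ℝ)
      · have hfx : fR x = f x := if_pos h
        calc ENNReal.ofReal (min 1 ‖f x - g x‖) ≤ ENNReal.ofReal ‖f x - g x‖ :=
              ENNReal.ofReal_le_ofReal (min_le_right _ _)
          _ = (‖fR x - g x‖₊ : ℝ≥0∞) := by rw [hfx, ofReal_norm, enorm_eq_nnnorm]
          _ ≤ _ := le_add_self
      · have hx : x ∈ {x : E | (N : ℝ) < ‖f x‖} := not_le.1 h
        calc ENNReal.ofReal (min 1 ‖f x - g x‖) ≤ ENNReal.ofReal 1 :=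
              ENNReal.ofReal_le_ofReal (min_le_left _ _)
          _ = Set.indicator {x : E | (N : ℝ) < ‖f x‖} (1 : E → ℝ≥0∞) x := by
              rw [ENNReal.ofReal_one, Set.indicator_of_mem hx]; rfl
          _ ≤ _ := le_self_add
    calc ∫⁻ x, ENNReal.ofReal (min 1 ‖f x - g x‖) ∂ν
        ≤ ∫⁻ x, (Set.indicator {x : E | (N : ℝ) < ‖f x‖} (1 : E → ℝ≥0∞) x
            + (‖fR x - g x‖₊ : ℝ≥0∞)) ∂ν := lintegral_mono hpt
      _ = ν {x : E | (N : ℝ) < ‖f x‖} + ∫⁻ x, (‖fR x - g x‖₊ : ℝ≥0∞) ∂ν := by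
          rw [lintegral_add_left (measurable_one.indicator (hsets N)),
            lintegral_indicator_one (hsets N)]
      _ ≤ ENNReal.ofReal δ + ENNReal.ofReal δ := add_le_add hN.le hgl
  -- the bounded continuous test function
  have hFcont : Continuous fun p : E × I => min 1 ‖ι p.2 - g p.1‖ :=
    continuous_const.min
      (((hι.continuous.comp continuous_snd).sub (g.continuous.comp continuous_fst)).norm)
  have hF0 : ∀ p : E × I, 0 ≤ min 1 ‖ι p.2 - g p.1‖ := fun p =>
    le_min zero_le_one (norm_nonneg _)
  have hF1 : ∀ p : E × I, min 1 ‖ι p.2 - g p.1‖ ≤ 1 := fun p => min_le_left _ _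
  set F : BoundedContinuousFunction (E × I) ℝ :=
    ⟨⟨fun p => min 1 ‖ι p.2 - g p.1‖, hFcont⟩, 2, fun p q => by
      rw [Real.dist_eq, abs_sub_le_iff]
      constructor <;> [linarith [hF0 q, hF1 p]; linarith [hF0 p, hF1 q]]⟩ with hFdef
  have hFval : ∀ p : E × I, F p = min 1 ‖ι p.2 - g p.1‖ := fun p => rfl
  have hFmeas : Measurable (fun p : E × I => ENNReal.ofReal (min 1 ‖ι p.2 - g p.1‖)) :=
    (ENNReal.continuous_ofReal.comp hFcont).measurable
  have hlig : ∀ (m' : Measure (E × I)) [IsFiniteMeasure m'],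
      ∫⁻ p, ENNReal.ofReal (min 1 ‖ι p.2 - g p.1‖) ∂m' = ENNReal.ofReal (∫ p, F p ∂m') := by
    intro m' _
    exact (ofReal_integral_eq_lintegral_ofReal (F.integrable m')
      (ae_of_all _ fun p => hF0 p)).symm
  -- value at the limit
  have hμval : ∫ p, F p ∂μ ≤ δ + δ := by
    have h1 : ∫⁻ p, ENNReal.ofReal (min 1 ‖ι p.2 - g p.1‖) ∂μ
        = ∫⁻ x, ENNReal.ofReal (min 1 ‖f x - g x‖) ∂ν := by
      have hgraphm : Measurable fun x : E => (x, κ x) := measurable_id.prodMk hκmeas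
      conv_lhs => rw [hμeq]
      rw [lintegral_map hFmeas hgraphm]
    have h2 : ENNReal.ofReal (∫ p, F p ∂μ) ≤ ENNReal.ofReal (δ + δ) := by
      rw [← hlig μ, h1]
      refine le_trans hbound ?_
      rw [ENNReal.ofReal_add hδ.le hδ.le]
    exact (ENNReal.ofReal_le_ofReal_iff (by linarith)).1 h2
  have hevent : ∀ᶠ n in atTop, ∫ p, F p ∂(μs n) < 3 * δ :=
    (hconv F).eventually_lt_const (by linarith)
  filter_upwards [hevent] with n hn
  calc beta (μs n) ≤ 2 * ∫⁻ p : E × I, ENNReal.ofReal (min 1 ‖ι p.2 - g p.1‖) ∂(μs n) :=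
        beta_le_lintegral (μs n) hι hFmeas
    _ = 2 * ENNReal.ofReal (∫ p, F p ∂(μs n)) := by rw [hlig (μs n)]
    _ ≤ 2 * ENNReal.ofReal (3 * δ) := by
        exact mul_le_mul_right (ENNReal.ofReal_le_ofReal hn.le) 2
    _ ≤ ε := by
        rw [← ENNReal.ofReal_ofNat 2, ← ENNReal.ofReal_mul (by norm_num)]
        have h6 : (2 : ℝ) * (3 * δ) ≤ c.toReal := by
          rw [hδdef]; nlinarith [ENNReal.toReal_nonneg (a := c)]
        calc ENNReal.ofReal ((2 : ℝ) * (3 * δ)) ≤ ENNReal.ofReal c.toReal :=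
              ENNReal.ofReal_le_ofReal h6
          _ = c := ENNReal.ofReal_toReal hctop
          _ ≤ ε := min_le_left _ _
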